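/- Suppose there exists γ* > 0 with γ_j ≥ γ* for all j ≥ 1. Then for every d ∈ ℕ, setting ε_d = (1/2)·(γ*·λ_2)^{d/2} ∈ (0,1), one has n(ε_d, d) ≥ 2^d. Consequently, none of EXP-SPT, EXP-PT, EXP-QPT holds. -/

import Mathlib

open Filter Real Set Topology
open scoped ENNReal NNReal

noncomputable section

/-- The weighted eigenvalues `λ_{k,j}`: `1` if `j = 1`, and `γ_k · λ_j` if `j ≥ 2`. -/
def lamKJ (γ lam : ℕ → ℝ) (k j : ℕ) : ℝ := if j = 1 then 1 else γ k * lam j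

/-- The information complexity `n(ε,d)`: the extended-natural cardinality of the set of
`d`-tuples of positive integers `(n_1,…,n_d)` with `λ_{1,n_1} ⋯ λ_{d,n_d} > ε²`. -/
def infoN (γ lam : ℕ → ℝ) (ε : ℝ) (d : ℕ) : ℕ∞ :=
  {n : Fin d → ℕ | (∀ i, 1 ≤ n i) ∧ ε ^ 2 < ∏ i, lamKJ γ lam (i.1 + 1) (n i)}.encard

/-- EXP-SPT with a given exponent `p`: there is `C ≥ 0` with
`n(ε,d) ≤ C (1 + log ε⁻¹)^p` for all `d ≥ 1` and `ε ∈ (0,1]`. -/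
def ExpSPTwith (γ lam : ℕ → ℝ) (p : ℝ) : Prop :=
  ∃ C : ℝ, 0 ≤ C ∧ ∀ d : ℕ, 1 ≤ d → ∀ ε : ℝ, 0 < ε → ε ≤ 1 →
    (infoN γ lam ε d : ℝ≥0∞) ≤ ENNReal.ofReal (C * (1 + Real.log ε⁻¹) ^ p)

/-- Exponential strong polynomial tractability. -/
def ExpSPT (γ lam : ℕ → ℝ) : Prop := ∃ p : ℝ, 0 ≤ p ∧ ExpSPTwith γ lam p

/-- Exponential polynomial tractability: there are `C, q, p ≥ 0` with
`n(ε,d) ≤ C d^q (1 + log ε⁻¹)^p` for all `d ≥ 1` and `ε ∈ (0,1]`. -/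
def ExpPT (γ lam : ℕ → ℝ) : Prop :=
  ∃ C q p : ℝ, 0 ≤ C ∧ 0 ≤ q ∧ 0 ≤ p ∧ ∀ d : ℕ, 1 ≤ d → ∀ ε : ℝ, 0 < ε → ε ≤ 1 →
    (infoN γ lam ε d : ℝ≥0∞) ≤ ENNReal.ofReal (C * (d : ℝ) ^ q * (1 + Real.log ε⁻¹) ^ p)

/-- EXP-QPT with a given exponent `t`. -/
def ExpQPTwith (γ lam : ℕ → ℝ) (t : ℝ) : Prop :=
  ∃ C : ℝ, 0 ≤ C ∧ ∀ d : ℕ, 1 ≤ d → ∀ ε : ℝ, 0 < ε → ε ≤ 1 →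
    (infoN γ lam ε d : ℝ≥0∞) ≤
      ENNReal.ofReal (C * Real.exp (t * (1 + Real.log d) * (1 + Real.log (1 + Real.log ε⁻¹))))

/-- Exponential quasi-polynomial tractability. -/
def ExpQPT (γ lam : ℕ → ℝ) : Prop := ∃ t : ℝ, 0 ≤ t ∧ ExpQPTwith γ lam t

/-- Exponential `(s,t)`-weak tractability:
`log max(1, n(ε,d)) / (d^t + (1 + log ε⁻¹)^s) → 0` as `d + ε⁻¹ → ∞`
(in particular `n(ε,d)` is finite for all such `d, ε`). -/
def ExpSTWT (γ lam : ℕ → ℝ) (s t : ℝ) : Prop :=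
  ∀ δ : ℝ, 0 < δ → ∃ T : ℝ, ∀ d : ℕ, 1 ≤ d → ∀ ε : ℝ, 0 < ε → ε ≤ 1 →
    T ≤ (d : ℝ) + ε⁻¹ →
    ∃ N : ℕ, infoN γ lam ε d = (N : ℕ∞) ∧
      Real.log (max 1 (N : ℝ)) / ((d : ℝ) ^ t + (1 + Real.log ε⁻¹) ^ s) < δ

/-- `j(ε) = max { j ≥ 1 : λ_j > ε² }` (a well-defined maximum when `λ_j → 0`). -/
def jEps (lam : ℕ → ℝ) (ε : ℝ) : ℕ := sSup {j : ℕ | 1 ≤ j ∧ ε ^ 2 < lam j}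

/-- `d(ε) = max { d ≥ 1 : γ_d > ε² }`, with `d(ε) = 0` if `γ_1 ≤ ε²`
(a well-defined maximum when `γ_d → 0`). -/
def dEps (γ : ℕ → ℝ) (ε : ℝ) : ℕ := sSup {d : ℕ | 1 ≤ d ∧ ε ^ 2 < γ d}

lemma exists_d_main14 (A : ℝ) : ∃ d : ℕ, 1 ≤ d ∧ A * (1 + Real.log d) ^ 2 < (d : ℝ) * Real.log 2 := by
  have h1 := Real.tendsto_pow_log_div_mul_add_atTop 1 0 2 one_ne_zero
  have h2 := Real.tendsto_pow_log_div_mul_add_atTop 1 0 1 one_ne_zero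
  have h3 : Tendsto (fun x : ℝ => x⁻¹) atTop (𝓝 0) := tendsto_inv_atTop_zero
  simp only [one_mul, add_zero, pow_one] at h1 h2
  have hcomb : Tendsto (fun x : ℝ => A * (x⁻¹ + 2 * (Real.log x / x) + Real.log x ^ 2 / x))
      atTop (𝓝 (A * (0 + 2 * 0 + 0))) :=
    Filter.Tendsto.const_mul A ((h3.add (h2.const_mul 2)).add h1)
  simp only [mul_zero, add_zero, zero_add] at hcomb
  have heq : ∀ᶠ x : ℝ in atTop,
      A * (x⁻¹ + 2 * (Real.log x / x) + Real.log x ^ 2 / x) = A * (1 + Real.log x) ^ 2 / x := by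
    filter_upwards [eventually_gt_atTop (0 : ℝ)] with x hx
    field_simp
    ring_nf
  have h : Tendsto (fun x : ℝ => A * (1 + Real.log x) ^ 2 / x) atTop (𝓝 0) :=
    hcomb.congr' heq
  have hlog2 : (0 : ℝ) < Real.log 2 := Real.log_pos one_lt_two
  have hev : ∀ᶠ x : ℝ in atTop, A * (1 + Real.log x) ^ 2 / x < Real.log 2 :=
    h.eventually_lt_const hlog2
  have hev2 : ∀ᶠ d : ℕ in atTop, A * (1 + Real.log d) ^ 2 / d < Real.log 2 :=
    tendsto_natCast_atTop_atTop.eventually hev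
  obtain ⟨d, hd1, hd2⟩ := (hev2.and (eventually_ge_atTop 1)).exists
  refine ⟨d, hd2, ?_⟩
  have hd0 : (0 : ℝ) < d := by exact_mod_cast hd2
  calc A * (1 + Real.log d) ^ 2 = A * (1 + Real.log d) ^ 2 / d * d := by field_simp
    _ < Real.log 2 * d := by exact mul_lt_mul_of_pos_right hd1 hd0
    _ = d * Real.log 2 := mul_comm _ _

set_option maxHeartbeats 1000000 in
/-- if γ_j ≥ γ* > 0 for all j, then for every d ≥ 1, with
ε_d = (1/2)(γ*·λ_2)^(d/2) ∈ (0,1), one has n(ε_d,d) ≥ 2^d; consequently none of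
EXP-SPT, EXP-PT, EXP-QPT holds. -/
theorem stmt14 (γ lam : ℕ → ℝ)
    (hlam_anti : AntitoneOn lam (Set.Ici 1)) (hlam1 : lam 1 = 1) (hlam2 : 0 < lam 2)
    (hlam_nonneg : ∀ j, 1 ≤ j → 0 ≤ lam j)
    (hγ_anti : AntitoneOn γ (Set.Ici 1))
    (hγ_pos : ∀ j, 1 ≤ j → 0 < γ j) (hγ_le : ∀ j, 1 ≤ j → γ j ≤ 1)
    (γstar : ℝ) (hγstar : 0 < γstar) (hγge : ∀ j, 1 ≤ j → γstar ≤ γ j) :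
    (∀ d : ℕ, 1 ≤ d →
      (0 < (1 / 2) * (γstar * lam 2) ^ ((d : ℝ) / 2) ∧
        (1 / 2) * (γstar * lam 2) ^ ((d : ℝ) / 2) < 1) ∧
      ((2 ^ d : ℕ) : ℕ∞) ≤ infoN γ lam ((1 / 2) * (γstar * lam 2) ^ ((d : ℝ) / 2)) d) ∧
    ¬ ExpSPT γ lam ∧ ¬ ExpPT γ lam ∧ ¬ ExpQPT γ lam := by
  set a : ℝ := γstar * lam 2 with ha_def
  have hγ1le : γstar ≤ 1 := le_trans (hγge 1 le_rfl) (hγ_le 1 le_rfl)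
  have hl2le : lam 2 ≤ 1 := hlam1 ▸ hlam_anti (mem_Ici.mpr le_rfl) (mem_Ici.mpr one_le_two) one_le_two
  have ha0 : 0 < a := mul_pos hγstar hlam2
  have ha1 : a ≤ 1 := by nlinarith
  set ε : ℕ → ℝ := fun d => (1 / 2) * a ^ ((d : ℝ) / 2) with hε_def
  have main : ∀ d : ℕ, 1 ≤ d →
      (0 < ε d ∧ ε d < 1) ∧
      ((2 ^ d : ℕ) : ℕ∞) ≤ infoN γ lam (ε d) d := by
    intro d hd
    have hr0 : (0 : ℝ) < a ^ ((d : ℝ) / 2) := Real.rpow_pos_of_pos ha0 _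
    have hr1 : a ^ ((d : ℝ) / 2) ≤ 1 := Real.rpow_le_one ha0.le ha1 (by positivity)
    refine ⟨⟨by positivity, by simp only [hε_def]; nlinarith⟩, ?_⟩
    rw [infoN]
    set f : (Fin d → Bool) → (Fin d → ℕ) := fun b i => if b i then 2 else 1 with hf_def
    have hinj : Function.Injective f := by
      intro b1 b2 h
      funext i
      have hi := congrFun h i
      simp only [hf_def] at hi
      cases hb1 : b1 i <;> cases hb2 : b2 i <;> simp [hb1, hb2] at hi ⊢
    have had : (0 : ℝ) < a ^ d := pow_pos ha0 d
    have hsq : (ε d) ^ 2 = (1 / 4) * a ^ d := by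
      have h2 : a ^ ((d : ℝ) / 2) * a ^ ((d : ℝ) / 2) = a ^ d := by
        rw [← Real.rpow_add ha0, add_halves, Real.rpow_natCast]
      simp only [hε_def]
      rw [mul_pow, pow_two, pow_two, h2]
      norm_num
    have hsub : f '' univ ⊆
        {n : Fin d → ℕ | (∀ i, 1 ≤ n i) ∧ ε d ^ 2 < ∏ i, lamKJ γ lam (i.1 + 1) (n i)} := by
      rintro _ ⟨b, -, rfl⟩
      refine ⟨fun i => by by_cases hb : b i <;> simp [hf_def, hb], ?_⟩
      have hfac : ∀ i : Fin d, a ≤ lamKJ γ lam (i.1 + 1) (f b i) := by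
        intro i
        by_cases hb : b i
        · simp only [hf_def, hb, if_true, lamKJ, OfNat.ofNat_ne_one, if_false]
          exact mul_le_mul_of_nonneg_right (hγge _ (Nat.le_add_left 1 i.1)) hlam2.le
        · simp only [hf_def, hb, if_false, lamKJ, if_true]
          exact ha1
      have hprodge : a ^ d ≤ ∏ i, lamKJ γ lam (i.1 + 1) (f b i) := by
        calc a ^ d = ∏ _i : Fin d, a := by simp [Finset.prod_const]
          _ ≤ _ := Finset.prod_le_prod (fun i _ => ha0.le) (fun i _ => hfac i)
      calc ε d ^ 2 = (1 / 4) * a ^ d := hsq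
        _ < a ^ d := by nlinarith
        _ ≤ _ := hprodge
    calc ((2 ^ d : ℕ) : ℕ∞) = (univ : Set (Fin d → Bool)).encard := by
          simp [Set.encard_univ, ENat.card_eq_coe_fintype_card]
      _ = (f '' univ).encard := (hinj.injOn.encard_image).symm
      _ ≤ _ := Set.encard_le_encard hsub
  have hloga : Real.log a ≤ 0 := Real.log_nonpos ha0.le ha1
  have hlog2 : (0 : ℝ) < Real.log 2 := Real.log_pos one_lt_two
  set K : ℝ := 1 + Real.log 2 - Real.log a / 2 with hK_def
  have hK1 : 1 ≤ K := by simp only [hK_def]; nlinarith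
  have hK0 : 0 < K := by linarith
  have hLeq : ∀ d : ℕ, 1 ≤ d → Real.log (ε d)⁻¹ = Real.log 2 - (d : ℝ) / 2 * Real.log a := by
    intro d hd
    have hr0 : (0 : ℝ) < a ^ ((d : ℝ) / 2) := Real.rpow_pos_of_pos ha0 _
    simp only [hε_def]
    rw [show (1 : ℝ) / 2 = 2⁻¹ by norm_num, mul_inv, inv_inv,
      Real.log_mul two_ne_zero (by positivity), Real.log_inv, Real.log_rpow ha0]
    ring
  have hL1 : ∀ d : ℕ, 1 ≤ d → 1 ≤ 1 + Real.log (ε d)⁻¹ := by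
    intro d hd
    rw [hLeq d hd]
    nlinarith [(Nat.cast_nonneg d : (0 : ℝ) ≤ d)]
  have hLK : ∀ d : ℕ, 1 ≤ d → 1 + Real.log (ε d)⁻¹ ≤ K * d := by
    intro d hd
    have hd1 : (1 : ℝ) ≤ d := by exact_mod_cast hd
    rw [hLeq d hd, hK_def]
    nlinarith
  have key : ∀ B : ℕ → ℝ,
      (∀ d : ℕ, 1 ≤ d → (infoN γ lam (ε d) d : ℝ≥0∞) ≤ ENNReal.ofReal (B d)) →
      (∃ A : ℝ, ∀ d : ℕ, 1 ≤ d → B d ≤ Real.exp (A * (1 + Real.log d) ^ 2)) → False := by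
    rintro B hB ⟨A, hA⟩
    obtain ⟨d, hd1, hdlt⟩ := exists_d_main14 A
    have h1 := (main d hd1).2
    have h2 := hB d hd1
    have h3 : ENNReal.ofReal ((2 ^ d : ℕ) : ℝ) ≤ ENNReal.ofReal (B d) := by
      rw [ENNReal.ofReal_natCast]
      calc ((2 ^ d : ℕ) : ℝ≥0∞) = (((2 ^ d : ℕ) : ℕ∞) : ℝ≥0∞) := by rw [ENat.toENNReal_coe]
        _ ≤ (infoN γ lam (ε d) d : ℝ≥0∞) := ENat.toENNReal_le.mpr h1
        _ ≤ _ := h2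
    have hpos : (0 : ℝ) < ((2 ^ d : ℕ) : ℝ) := by positivity
    have h4 : ((2 : ℝ) ^ d) ≤ B d := by
      by_contra hc
      push_neg at hc
      have hlt : ENNReal.ofReal (B d) < ENNReal.ofReal ((2 ^ d : ℕ) : ℝ) :=
        (ENNReal.ofReal_lt_ofReal_iff hpos).mpr (by push_cast; linarith)
      exact absurd h3 (not_le.mpr hlt)
    have h5 := hA d hd1
    have h6 : Real.exp (A * (1 + Real.log d) ^ 2) < Real.exp ((d : ℝ) * Real.log 2) :=
      Real.exp_lt_exp.mpr hdlt
    have h7 : Real.exp ((d : ℝ) * Real.log 2) = 2 ^ d := by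
      rw [Real.exp_nat_mul, Real.exp_log two_pos]
    linarith
  refine ⟨main, ?_, ?_, ?_⟩
  · rintro ⟨p, hp, C, hC, h⟩
    refine key (fun d => C * (1 + Real.log (ε d)⁻¹) ^ p)
      (fun d hd => h d hd (ε d) (main d hd).1.1 (main d hd).1.2.le) ?_
    set C' := max C 1 with hC'_def
    have hC'1 : (1 : ℝ) ≤ C' := le_max_right _ _
    have hC'0 : (0 : ℝ) < C' := lt_of_lt_of_le one_pos hC'1
    have hlC' : 0 ≤ Real.log C' := Real.log_nonneg hC'1
    have hlK : 0 ≤ Real.log K := Real.log_nonneg hK1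
    refine ⟨Real.log C' + p * Real.log K + p, fun d hd => ?_⟩
    have hd1 : (1 : ℝ) ≤ d := by exact_mod_cast hd
    have hd0 : (0 : ℝ) < d := by linarith
    have hld : 0 ≤ Real.log d := Real.log_nonneg hd1
    have hKd0 : (0 : ℝ) < K * d := mul_pos hK0 hd0
    have hL1' := hL1 d hd
    have hstep1 : C * (1 + Real.log (ε d)⁻¹) ^ p ≤ C' * (K * d) ^ p :=
      mul_le_mul (le_max_left _ _)
        (Real.rpow_le_rpow (by linarith) (hLK d hd) hp)
        (Real.rpow_nonneg (by linarith) _) hC'0.le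
    have hstep2 : C' * (K * (d : ℝ)) ^ p ≤
        Real.exp (Real.log C' + p * (Real.log K + Real.log d)) := by
      rw [Real.exp_add, Real.exp_log hC'0]
      apply mul_le_mul_of_nonneg_left _ hC'0.le
      rw [Real.rpow_def_of_pos hKd0, Real.log_mul hK0.ne' (by positivity)]
      exact le_of_eq (congrArg Real.exp (mul_comm _ _))
    have hstep3 : Real.log C' + p * (Real.log K + Real.log d) ≤
        (Real.log C' + p * Real.log K + p) * (1 + Real.log d) ^ 2 := by
      nlinarith [mul_nonneg hp hld, mul_nonneg hlC' hld, mul_nonneg (mul_nonneg hp hlK) hld,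
        mul_nonneg hp (mul_nonneg hld hld), sq_nonneg (Real.log d)]
    calc C * (1 + Real.log (ε d)⁻¹) ^ p ≤ C' * (K * d) ^ p := hstep1
      _ ≤ Real.exp (Real.log C' + p * (Real.log K + Real.log d)) := hstep2
      _ ≤ _ := Real.exp_le_exp.mpr hstep3
  · rintro ⟨C, q, p, hC, hq, hp, h⟩
    refine key (fun d => C * (d : ℝ) ^ q * (1 + Real.log (ε d)⁻¹) ^ p)
      (fun d hd => h d hd (ε d) (main d hd).1.1 (main d hd).1.2.le) ?_
    set C' := max C 1 with hC'_def
    have hC'1 : (1 : ℝ) ≤ C' := le_max_right _ _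
    have hC'0 : (0 : ℝ) < C' := lt_of_lt_of_le one_pos hC'1
    have hlC' : 0 ≤ Real.log C' := Real.log_nonneg hC'1
    have hlK : 0 ≤ Real.log K := Real.log_nonneg hK1
    refine ⟨Real.log C' + p * Real.log K + p + q, fun d hd => ?_⟩
    have hd1 : (1 : ℝ) ≤ d := by exact_mod_cast hd
    have hd0 : (0 : ℝ) < d := by linarith
    have hld : 0 ≤ Real.log d := Real.log_nonneg hd1
    have hKd0 : (0 : ℝ) < K * d := mul_pos hK0 hd0
    have hL1' := hL1 d hd
    have hstep1 : C * (d : ℝ) ^ q * (1 + Real.log (ε d)⁻¹) ^ p ≤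
        C' * (d : ℝ) ^ q * (K * d) ^ p := by
      apply mul_le_mul
      · exact mul_le_mul_of_nonneg_right (le_max_left _ _) (Real.rpow_nonneg hd0.le _)
      · exact Real.rpow_le_rpow (by linarith) (hLK d hd) hp
      · exact Real.rpow_nonneg (by linarith) _
      · positivity
    have hstep2 : C' * (d : ℝ) ^ q * (K * (d : ℝ)) ^ p ≤
        Real.exp (Real.log C' + q * Real.log d + p * (Real.log K + Real.log d)) := by
      rw [Real.exp_add, Real.exp_add, Real.exp_log hC'0]
      apply mul_le_mul
      · apply mul_le_mul_of_nonneg_left _ hC'0.le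
        rw [Real.rpow_def_of_pos hd0]
        exact le_of_eq (congrArg Real.exp (mul_comm _ _))
      · rw [Real.rpow_def_of_pos hKd0, Real.log_mul hK0.ne' hd0.ne']
        exact le_of_eq (congrArg Real.exp (mul_comm _ _))
      · exact Real.rpow_nonneg hKd0.le _
      · positivity
    have hstep3 : Real.log C' + q * Real.log d + p * (Real.log K + Real.log d) ≤
        (Real.log C' + p * Real.log K + p + q) * (1 + Real.log d) ^ 2 := by
      nlinarith [mul_nonneg hp hld, mul_nonneg hq hld, mul_nonneg hlC' hld,
        mul_nonneg (mul_nonneg hp hlK) hld, mul_nonneg hp (mul_nonneg hld hld),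
        mul_nonneg hq (mul_nonneg hld hld), sq_nonneg (Real.log d)]
    calc C * (d : ℝ) ^ q * (1 + Real.log (ε d)⁻¹) ^ p ≤ C' * (d : ℝ) ^ q * (K * d) ^ p := hstep1
      _ ≤ Real.exp (Real.log C' + q * Real.log d + p * (Real.log K + Real.log d)) := hstep2
      _ ≤ _ := Real.exp_le_exp.mpr hstep3
  · rintro ⟨t, ht, C, hC, h⟩
    refine key (fun d => C * Real.exp (t * (1 + Real.log d) *
        (1 + Real.log (1 + Real.log (ε d)⁻¹))))
      (fun d hd => h d hd (ε d) (main d hd).1.1 (main d hd).1.2.le) ?_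
    set C' := max C 1 with hC'_def
    have hC'1 : (1 : ℝ) ≤ C' := le_max_right _ _
    have hC'0 : (0 : ℝ) < C' := lt_of_lt_of_le one_pos hC'1
    have hlC' : 0 ≤ Real.log C' := Real.log_nonneg hC'1
    have hlK : 0 ≤ Real.log K := Real.log_nonneg hK1
    refine ⟨Real.log C' + t * (1 + Real.log K), fun d hd => ?_⟩
    have hd1 : (1 : ℝ) ≤ d := by exact_mod_cast hd
    have hd0 : (0 : ℝ) < d := by linarith
    have hld : 0 ≤ Real.log d := Real.log_nonneg hd1
    have hL1' := hL1 d hd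
    have hlogL : Real.log (1 + Real.log (ε d)⁻¹) ≤ Real.log K + Real.log d := by
      rw [← Real.log_mul hK0.ne' hd0.ne']
      exact Real.log_le_log (by linarith) (hLK d hd)
    have hs1 : 1 + Real.log (1 + Real.log (ε d)⁻¹) ≤
        (1 + Real.log K) * (1 + Real.log d) := by nlinarith [mul_nonneg hlK hld]
    have ht1 : 0 ≤ t * (1 + Real.log d) := mul_nonneg ht (by linarith)
    have hexp : t * (1 + Real.log d) * (1 + Real.log (1 + Real.log (ε d)⁻¹)) ≤
        t * (1 + Real.log K) * (1 + Real.log d) ^ 2 := by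
      calc t * (1 + Real.log d) * (1 + Real.log (1 + Real.log (ε d)⁻¹))
          ≤ t * (1 + Real.log d) * ((1 + Real.log K) * (1 + Real.log d)) :=
            mul_le_mul_of_nonneg_left hs1 ht1
        _ = t * (1 + Real.log K) * (1 + Real.log d) ^ 2 := by ring
    have hstep3 : Real.log C' + t * (1 + Real.log K) * (1 + Real.log d) ^ 2 ≤
        (Real.log C' + t * (1 + Real.log K)) * (1 + Real.log d) ^ 2 := by
      nlinarith [mul_nonneg hlC' hld, mul_nonneg hlC' (mul_nonneg hld hld)]
    calc C * Real.exp (t * (1 + Real.log d) * (1 + Real.log (1 + Real.log (ε d)⁻¹)))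
        ≤ C' * Real.exp (t * (1 + Real.log K) * (1 + Real.log d) ^ 2) :=
          mul_le_mul (le_max_left _ _) (Real.exp_le_exp.mpr hexp) (Real.exp_pos _).le hC'0.le
      _ = Real.exp (Real.log C' + t * (1 + Real.log K) * (1 + Real.log d) ^ 2) := by
          rw [Real.exp_add, Real.exp_log hC'0]
      _ ≤ _ := Real.exp_le_exp.mpr hstep3
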